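/- Let C = (c_{xy}) ∈ [-1,1]^{2×2} and set θ_{xy} = arccos(c_{xy}) ∈ [0,π] for x, y ∈ {1,2}. Then C admits a PSD completion (i.e., there exists X ∈ E₄ with X_{x, 2+y} = c_{xy} for all x, y) if and only if max{|θ₁₁ − θ₁₂|, |θ₂₁ − θ₂₂|} ≤ min{θ₁₁ + θ₁₂, θ₂₁ + θ₂₂, 2π − (θ₁₁ + θ₁₂), 2π − (θ₂₁ + θ₂₂)}. -/

import Mathlib

open Matrix Real

/-- `X ∈ E₄` is a PSD completion of the `2 × 2` matrix `C`. -/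
def IsPSDCompletion22 (X : Matrix (Fin 4) (Fin 4) ℝ)
    (C : Matrix (Fin 2) (Fin 2) ℝ) : Prop :=
  X.PosSemidef ∧ (∀ i, X i i = 1) ∧
  X 0 2 = C 0 0 ∧ X 0 3 = C 0 1 ∧ X 1 2 = C 1 0 ∧ X 1 3 = C 1 1

lemma cos_le_cos_iff' {x y : ℝ} (hx : x ∈ Set.Icc 0 π) (hy : y ∈ Set.Icc 0 π) :
    cos x ≤ cos y ↔ y ≤ x :=
  Real.strictAntiOn_cos.le_iff_ge hx hy

lemma key {α β γ : ℝ} (hα : α ∈ Set.Icc 0 π) (hβ : β ∈ Set.Icc 0 π) (hγ : γ ∈ Set.Icc 0 π) :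
    0 ≤ 1 - cos α ^ 2 - cos β ^ 2 - cos γ ^ 2 + 2 * cos α * cos β * cos γ ↔
    (|β - γ| ≤ α ∧ α ≤ β + γ ∧ α ≤ 2 * π - (β + γ)) := by
  obtain ⟨hα0, hαπ⟩ := hα
  obtain ⟨hβ0, hβπ⟩ := hβ
  obtain ⟨hγ0, hγπ⟩ := hγ
  have hsβ := Real.sin_nonneg_of_nonneg_of_le_pi hβ0 hβπ
  have hsγ := Real.sin_nonneg_of_nonneg_of_le_pi hγ0 hγπ
  have hfact : 1 - cos α ^ 2 - cos β ^ 2 - cos γ ^ 2 + 2 * cos α * cos β * cos γ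
      = (cos (β - γ) - cos α) * (cos α - cos (β + γ)) := by
    rw [Real.cos_sub, Real.cos_add]
    linear_combination (-(sin γ)^2) * (Real.sin_sq_add_cos_sq β)
      + (-(1 - cos β ^ 2)) * (Real.sin_sq_add_cos_sq γ)
  have hsum : 0 ≤ (cos (β - γ) - cos α) + (cos α - cos (β + γ)) := by
    rw [Real.cos_sub, Real.cos_add]; nlinarith [mul_nonneg hsβ hsγ]
  have hprod : 0 ≤ (cos (β - γ) - cos α) * (cos α - cos (β + γ)) ↔
      cos α ≤ cos (β - γ) ∧ cos (β + γ) ≤ cos α := by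
    constructor
    · intro h
      constructor
      · by_contra hc; push_neg at hc; nlinarith
      · by_contra hc; push_neg at hc; nlinarith
    · rintro ⟨h1, h2⟩; nlinarith
  rw [hfact, hprod]
  have habs : |β - γ| ∈ Set.Icc 0 π :=
    ⟨abs_nonneg _, abs_le.2 ⟨by linarith, by linarith⟩⟩
  have h1 : cos α ≤ cos (β - γ) ↔ |β - γ| ≤ α := by
    rw [← Real.cos_abs (β - γ)]
    exact cos_le_cos_iff' ⟨hα0, hαπ⟩ habs
  have hm : cos (β + γ) = cos (min (β + γ) (2 * π - (β + γ))) := by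
    rcases min_cases (β + γ) (2 * π - (β + γ)) with ⟨h, _⟩ | ⟨h, _⟩
    · rw [h]
    · rw [h, Real.cos_sub, Real.cos_two_pi, Real.sin_two_pi]; ring
  have hmIcc : min (β + γ) (2 * π - (β + γ)) ∈ Set.Icc 0 π := by
    constructor
    · have hpi := Real.pi_pos
      exact le_min (by linarith) (by linarith)
    · rcases min_cases (β + γ) (2 * π - (β + γ)) with ⟨h, h2⟩ | ⟨h, h2⟩ <;> rw [h] <;> linarith
  have h2 : cos (β + γ) ≤ cos α ↔ (α ≤ β + γ ∧ α ≤ 2 * π - (β + γ)) := by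
    rw [hm, cos_le_cos_iff' hmIcc ⟨hα0, hαπ⟩, le_min_iff]
  rw [h1, h2]

lemma psd_det_nonneg {n : ℕ} {A : Matrix (Fin n) (Fin n) ℝ} (hA : A.PosSemidef) :
    0 ≤ A.det := by
  rw [hA.1.det_eq_prod_eigenvalues]
  exact Finset.prod_nonneg fun i _ => hA.eigenvalues_nonneg i

lemma sym_of_psd {X : Matrix (Fin 4) (Fin 4) ℝ} (hX : X.PosSemidef) :
    ∀ a b, X b a = X a b := fun a b => by
  have := congrFun (congrFun hX.1 b) a
  simpa using this.symm

lemma sq_le_one_of_psd {X : Matrix (Fin 4) (Fin 4) ℝ} (hX : X.PosSemidef)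
    (hd : ∀ i, X i i = 1) (i j : Fin 4) : 0 ≤ 1 - (X i j) ^ 2 := by
  have h := psd_det_nonneg (hX.submatrix ![i, j])
  rw [Matrix.det_fin_two] at h
  simp only [Matrix.submatrix_apply, Matrix.cons_val_zero, Matrix.cons_val_one,
    Matrix.head_cons] at h
  rw [hd i, hd j, sym_of_psd hX i j] at h
  nlinarith [h]

lemma G_of_psd {X : Matrix (Fin 4) (Fin 4) ℝ} (hX : X.PosSemidef)
    (hd : ∀ i, X i i = 1) (i j k : Fin 4) :
    0 ≤ 1 - (X j k) ^ 2 - (X i j) ^ 2 - (X i k) ^ 2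
        + 2 * (X j k) * (X i j) * (X i k) := by
  have h := psd_det_nonneg (hX.submatrix ![i, j, k])
  rw [Matrix.det_fin_three] at h
  simp only [Matrix.submatrix_apply, Matrix.cons_val_zero, Matrix.cons_val_one,
    Matrix.head_cons, Matrix.cons_val_two, Matrix.tail_cons] at h
  rw [hd i, hd j, hd k, sym_of_psd hX i j, sym_of_psd hX i k, sym_of_psd hX j k] at h
  nlinarith [h]

theorem stmt13 (C : Matrix (Fin 2) (Fin 2) ℝ)
    (hC : ∀ x y, C x y ∈ Set.Icc (-1 : ℝ) 1)
    (θ : Fin 2 → Fin 2 → ℝ) (hθ : ∀ x y, θ x y = Real.arccos (C x y)) :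
    (∃ X, IsPSDCompletion22 X C) ↔
      max |θ 0 0 - θ 0 1| |θ 1 0 - θ 1 1| ≤
        min (min (θ 0 0 + θ 0 1) (θ 1 0 + θ 1 1))
            (min (2 * π - (θ 0 0 + θ 0 1)) (2 * π - (θ 1 0 + θ 1 1))) := by
  have hci : ∀ x y, C x y = cos (θ x y) := fun x y => by
    rw [hθ, Real.cos_arccos (hC x y).1 (hC x y).2]
  have hθIcc : ∀ x y, θ x y ∈ Set.Icc 0 π := fun x y => by
    rw [hθ]; exact ⟨Real.arccos_nonneg _, Real.arccos_le_pi _⟩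
  constructor
  · rintro ⟨X, hPSD, hdiag, h02, h03, h12, h13⟩
    set t := X 2 3 with ht_def
    have ht2 : 0 ≤ 1 - t ^ 2 := sq_le_one_of_psd hPSD hdiag 2 3
    have ht : t ∈ Set.Icc (-1 : ℝ) 1 := ⟨by nlinarith, by nlinarith⟩
    set α := Real.arccos t with hα_def
    have hαIcc : α ∈ Set.Icc 0 π := ⟨Real.arccos_nonneg _, Real.arccos_le_pi _⟩
    have hcosα : cos α = t := Real.cos_arccos ht.1 ht.2
    have hG0 : 0 ≤ 1 - t ^ 2 - (C 0 0) ^ 2 - (C 0 1) ^ 2 + 2 * t * (C 0 0) * (C 0 1) := by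
      have h := G_of_psd hPSD hdiag 0 2 3
      rw [h02, h03] at h; exact h
    have hG1 : 0 ≤ 1 - t ^ 2 - (C 1 0) ^ 2 - (C 1 1) ^ 2 + 2 * t * (C 1 0) * (C 1 1) := by
      have h := G_of_psd hPSD hdiag 1 2 3
      rw [h12, h13] at h; exact h
    obtain ⟨l0, u0a, u0b⟩ := (key hαIcc (hθIcc 0 0) (hθIcc 0 1)).1 (by
      rw [hcosα, ← hci 0 0, ← hci 0 1]; exact hG0)
    obtain ⟨l1, u1a, u1b⟩ := (key hαIcc (hθIcc 1 0) (hθIcc 1 1)).1 (by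
      rw [hcosα, ← hci 1 0, ← hci 1 1]; exact hG1)
    simp only [max_le_iff, le_min_iff]
    refine ⟨⟨⟨?_, ?_⟩, ?_, ?_⟩, ⟨?_, ?_⟩, ?_, ?_⟩ <;> linarith
  · intro h
    set φ := max |θ 0 0 - θ 0 1| |θ 1 0 - θ 1 1| with hφ_def
    have hpi := Real.pi_pos
    have hφIcc : φ ∈ Set.Icc 0 π := by
      constructor
      · exact le_max_of_le_left (abs_nonneg _)
      · refine max_le (abs_le.2 ⟨?_, ?_⟩) (abs_le.2 ⟨?_, ?_⟩) <;>
          [skip; skip; skip; skip] <;>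
          first
          | linarith [(hθIcc 0 0).1, (hθIcc 0 0).2, (hθIcc 0 1).1, (hθIcc 0 1).2]
          | linarith [(hθIcc 1 0).1, (hθIcc 1 0).2, (hθIcc 1 1).1, (hθIcc 1 1).2]
    simp only [le_min_iff] at h
    obtain ⟨⟨h0a, h1a⟩, h0c, h1c⟩ := h
    have hlow : ∀ x : Fin 2, |θ x 0 - θ x 1| ≤ φ := by
      intro x; fin_cases x
      · exact le_max_left _ _
      · exact le_max_right _ _
    have hup1 : ∀ x : Fin 2, φ ≤ θ x 0 + θ x 1 := by
      intro x; fin_cases x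
      · exact h0a
      · exact h1a
    have hup2 : ∀ x : Fin 2, φ ≤ 2 * π - (θ x 0 + θ x 1) := by
      intro x; fin_cases x
      · exact h0c
      · exact h1c
    have hG : ∀ x : Fin 2,
        0 ≤ 1 - cos φ ^ 2 - (C x 0) ^ 2 - (C x 1) ^ 2 + 2 * cos φ * C x 0 * C x 1 := by
      intro x
      rw [hci x 0, hci x 1]
      exact (key hφIcc (hθIcc x 0) (hθIcc x 1)).2 ⟨hlow x, hup1 x, hup2 x⟩
    set q : Fin 2 → ℝ := fun x => (C x 1 - C x 0 * cos φ) / sin φ with hq_def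
    have hA : ∀ x : Fin 2, C x 0 * cos φ + q x * sin φ = C x 1 := by
      intro x
      by_cases hs : sin φ = 0
      · have hφ01 : φ = 0 ∨ φ = π := by
          rcases eq_or_lt_of_le hφIcc.2 with hp | hp
          · right; exact hp
          · left
            exact (Real.sin_eq_zero_iff_of_lt_of_lt (by linarith [hφIcc.1]) hp).1 hs
        rcases hφ01 with h0 | hp
        · have heq : θ x 0 = θ x 1 := by
            have hl := hlow x
            rw [h0] at hl
            have := abs_nonneg (θ x 0 - θ x 1)
            have : |θ x 0 - θ x 1| = 0 := le_antisymm hl this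
            have := abs_eq_zero.1 this
            linarith
          rw [hs, h0, Real.cos_zero, hci x 0, hci x 1, heq]; ring
        · have hsum : θ x 0 + θ x 1 = π := by
            have h1 := hup1 x; have h2 := hup2 x; rw [hp] at h1 h2; linarith
          rw [hs, hp, Real.cos_pi, hci x 0, hci x 1]
          have : θ x 1 = π - θ x 0 := by linarith
          rw [this, Real.cos_pi_sub]; ring
      · have hq : q x * sin φ = C x 1 - C x 0 * cos φ := div_mul_cancel₀ _ hs
        linarith
    have hB : ∀ x : Fin 2, (C x 0) ^ 2 + (q x) ^ 2 ≤ 1 := by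
      intro x
      by_cases hs : sin φ = 0
      · have : q x = 0 := by rw [hq_def]; simp [hs]
        rw [this]
        nlinarith [(hC x 0).1, (hC x 0).2]
      · have hq : q x * sin φ = C x 1 - C x 0 * cos φ := div_mul_cancel₀ _ hs
        have hs2 : 0 < sin φ ^ 2 := pow_two_pos_of_ne_zero hs
        have hq2 : (q x) ^ 2 * (sin φ) ^ 2 = (C x 1 - C x 0 * cos φ) ^ 2 := by
          rw [← mul_pow, hq]
        nlinarith [hG x, Real.sin_sq_add_cos_sq φ, hq2, hs2]
    set r : Fin 2 → ℝ := fun x => Real.sqrt (1 - (C x 0) ^ 2 - (q x) ^ 2) with hr_def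
    have hr : ∀ x : Fin 2, (r x) ^ 2 = 1 - (C x 0) ^ 2 - (q x) ^ 2 := fun x =>
      Real.sq_sqrt (by linarith [hB x])
    set B : Matrix (Fin 3) (Fin 4) ℝ :=
      Matrix.of ![![C 0 0, C 1 0, 1, cos φ], ![q 0, q 1, 0, sin φ], ![r 0, r 1, 0, 0]]
      with hB_def
    have hent : ∀ i j, (Bᴴ * B) i j = B 0 i * B 0 j + B 1 i * B 1 j + B 2 i * B 2 j := by
      intro i j
      simp [Matrix.mul_apply, Matrix.conjTranspose_apply, Fin.sum_univ_three]
    refine ⟨Bᴴ * B, Matrix.posSemidef_conjTranspose_mul_self B, ?_, ?_, ?_, ?_, ?_⟩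
    · intro i
      fin_cases i <;> rw [hent] <;> simp [hB_def, Matrix.vecHead, Matrix.vecTail]
      · nlinarith [hr 0]
      · nlinarith [hr 1]
      · nlinarith [Real.sin_sq_add_cos_sq φ]
    · rw [hent]; simp [hB_def, Matrix.vecHead, Matrix.vecTail]
    · rw [hent]; simp [hB_def, Matrix.vecHead, Matrix.vecTail]; nlinarith [hA 0]
    · rw [hent]; simp [hB_def, Matrix.vecHead, Matrix.vecTail]
    · rw [hent]; simp [hB_def, Matrix.vecHead, Matrix.vecTail]; nlinarith [hA 1]
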